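/- Let R be a Hermitian d×d matrix, σ a positive semidefinite d×d matrix with trace 1, μ = Tr(R²σ), and 0 ≤ δ ≤ 1. Suppose ‖σ^{1/2} R σ^{1/2}‖_{S1} ≥ (1 − δ)√μ. Then ‖(R² − μ·Id)σ^{1/2}‖_F² ≤ C √δ ‖R‖_{op}² μ for a universal constant C. -/

import Mathlib

open Matrix ComplexOrder

/-- The square root of a positive semidefinite matrix, as defined in the older Mathlib. -/
noncomputable def Matrix.PosSemidef.sqrt {n : Type*} [Fintype n] [DecidableEq n] {𝕜 : Type*} [RCLike 𝕜]
    {A : Matrix n n 𝕜} (hA : A.PosSemidef) : Matrix n n 𝕜 :=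
  hA.1.eigenvectorUnitary.1 * diagonal ((↑) ∘ (Real.sqrt ·) ∘ hA.1.eigenvalues) *
  (star hA.1.eigenvectorUnitary : Matrix n n 𝕜)

/-- The Frobenius norm of a complex square matrix: `(Tr(AᴴA))^{1/2}`. -/
noncomputable def frobNorm {d : ℕ} (A : Matrix (Fin d) (Fin d) ℂ) : ℝ :=
  Real.sqrt ((Aᴴ * A).trace.re)

/-- The Schatten-1 (nuclear) norm: the sum of singular values, i.e. `Tr((AᴴA)^{1/2})`. -/
noncomputable def nucNorm {d : ℕ} (A : Matrix (Fin d) (Fin d) ℂ) : ℝ :=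
  ((Matrix.posSemidef_conjTranspose_mul_self A).sqrt).trace.re
/-- The operator norm (largest singular value) of a complex square matrix. -/
noncomputable def opNorm {d : ℕ} (A : Matrix (Fin d) (Fin d) ℂ) : ℝ :=
  ‖Matrix.toEuclideanCLM (𝕜 := ℂ) A‖

section Helpers
variable {d : ℕ}

section SqrtPort
open scoped MatrixOrder

lemma Matrix.PosSemidef.sqrt_eq_cfc' {A : Matrix (Fin d) (Fin d) ℂ} (hA : A.PosSemidef) :
    hA.sqrt = CFC.sqrt A := by
  rw [CFC.sqrt_eq_real_sqrt A hA.nonneg, cfcₙ_eq_cfc, hA.1.cfc_eq, Matrix.IsHermitian.cfc,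
    Unitary.conjStarAlgAut_apply]
  rfl

lemma Matrix.PosSemidef.sqrt_mul_self {A : Matrix (Fin d) (Fin d) ℂ} (hA : A.PosSemidef) :
    hA.sqrt * hA.sqrt = A := by
  rw [hA.sqrt_eq_cfc']
  exact CFC.sqrt_mul_sqrt_self A hA.nonneg

lemma Matrix.PosSemidef.posSemidef_sqrt {A : Matrix (Fin d) (Fin d) ℂ} (hA : A.PosSemidef) :
    hA.sqrt.PosSemidef := by
  rw [hA.sqrt_eq_cfc']
  exact (CFC.sqrt_nonneg A).posSemidef

lemma Matrix.PosSemidef.eq_sqrt_of_sq_eq {B : Matrix (Fin d) (Fin d) ℂ} (hB : B.PosSemidef)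
    {A : Matrix (Fin d) (Fin d) ℂ} (hA : A.PosSemidef) (h : B ^ 2 = A) : B = hA.sqrt := by
  rw [hA.sqrt_eq_cfc']
  exact (CFC.sqrt_unique (by rw [← h, pow_two]) hB.nonneg).symm

end SqrtPort


noncomputable def emb (X : Matrix (Fin d) (Fin d) ℂ) : EuclideanSpace ℂ (Fin d × Fin d) :=
  WithLp.toLp 2 (fun p => X p.1 p.2)

lemma emb_add (X Y : Matrix (Fin d) (Fin d) ℂ) : emb (X + Y) = emb X + emb Y := rfl
lemma emb_sub (X Y : Matrix (Fin d) (Fin d) ℂ) : emb (X - Y) = emb X - emb Y := rfl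
lemma emb_smul (c : ℂ) (X : Matrix (Fin d) (Fin d) ℂ) : emb (c • X) = c • emb X := rfl

lemma emb_inner (X Y : Matrix (Fin d) (Fin d) ℂ) :
    (inner ℂ (emb X) (emb Y) : ℂ) = (Xᴴ * Y).trace := by
  simp only [PiLp.inner_apply, emb, PiLp.toLp_apply, Matrix.trace,
    Matrix.diag, Matrix.mul_apply, conjTranspose_apply, RCLike.inner_apply]
  rw [Fintype.sum_prod_type, Finset.sum_comm]
  exact Finset.sum_congr rfl fun _ _ => Finset.sum_congr rfl fun _ _ => mul_comm _ _

lemma emb_norm_sq (X : Matrix (Fin d) (Fin d) ℂ) : ‖emb X‖ ^ 2 = (Xᴴ * X).trace.re := by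
  have h := norm_sq_eq_re_inner (𝕜 := ℂ) (emb X)
  rw [emb_inner] at h
  simpa using h

lemma trace_re_nonneg {P : Matrix (Fin d) (Fin d) ℂ} (hP : P.PosSemidef) : 0 ≤ P.trace.re := by
  have h : ∀ i, 0 ≤ (P i i).re := by
    intro i
    have := hP.dotProduct_mulVec_nonneg (Pi.single i 1)
    have h2 : (star (Pi.single i 1) ⬝ᵥ P *ᵥ Pi.single i 1 : ℂ) = P i i := by
      simp [dotProduct, mulVec, Pi.single_apply]
    rw [h2] at this
    exact (Complex.le_def.mp this).1
  simpa [Matrix.trace, Complex.re_sum] using Finset.sum_nonneg fun i _ => h i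

lemma trace_mul_re_nonneg {P Q : Matrix (Fin d) (Fin d) ℂ} (hP : P.PosSemidef)
    (hQ : Q.PosSemidef) : 0 ≤ (P * Q).trace.re := by
  have h1 : P * Q = P * (hQ.sqrt * hQ.sqrt) := by rw [hQ.sqrt_mul_self]
  have h2 : ((P * (hQ.sqrt * hQ.sqrt)).trace) = ((hQ.sqrt * P * hQ.sqrt).trace) := by
    rw [← Matrix.mul_assoc, Matrix.trace_mul_cycle, Matrix.mul_assoc]
  have h3 : (hQ.sqrt * P * hQ.sqrt).PosSemidef := by
    have := hP.mul_mul_conjTranspose_same hQ.sqrt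
    rwa [hQ.posSemidef_sqrt.1] at this
  rw [h1, h2]
  exact trace_re_nonneg h3

lemma eig_abs_le_opNorm {R : Matrix (Fin d) (Fin d) ℂ} (hR : R.IsHermitian) (i : Fin d) :
    |hR.eigenvalues i| ≤ opNorm R := by
  set v := hR.eigenvectorBasis i with hv
  have hnv : ‖v‖ = 1 := hR.eigenvectorBasis.orthonormal.1 i
  have happ : Matrix.toEuclideanCLM (𝕜 := ℂ) R v = hR.eigenvalues i • v := by
    have h1 : Matrix.toEuclideanCLM (𝕜 := ℂ) R ((WithLp.equiv 2 _).symm (⇑v)) =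
        (WithLp.equiv 2 _).symm (R *ᵥ ⇑v) := by
      simp only [WithLp.equiv_symm_apply, Matrix.toEuclideanCLM_toLp]
    rw [hR.mulVec_eigenvectorBasis] at h1
    exact h1
  have hle : ‖Matrix.toEuclideanCLM (𝕜 := ℂ) R v‖ ≤ opNorm R * ‖v‖ :=
    (Matrix.toEuclideanCLM (𝕜 := ℂ) R).le_opNorm v
  rw [happ, norm_smul, hnv, mul_one, mul_one] at hle
  simpa using hle

lemma emb_mul_le {M Y : Matrix (Fin d) (Fin d) ℂ} {c : ℝ} (hc : 0 ≤ c)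
    (h : Matrix.PosSemidef ((((c^2 : ℝ)) : ℂ) • 1 - Mᴴ * M)) :
    ‖emb (M * Y)‖ ≤ c * ‖emb Y‖ := by
  have key : ‖emb (M * Y)‖ ^ 2 ≤ (c * ‖emb Y‖) ^ 2 := by
    have hpsd : (Yᴴ * ((((c^2 : ℝ)) : ℂ) • 1 - Mᴴ * M) * Y).PosSemidef := by
      have := h.mul_mul_conjTranspose_same Yᴴ
      rwa [conjTranspose_conjTranspose] at this
    have htr := trace_re_nonneg hpsd
    have hexp : Yᴴ * ((((c^2 : ℝ)) : ℂ) • 1 - Mᴴ * M) * Y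
        = (((c^2 : ℝ)) : ℂ) • (Yᴴ * Y) - (M * Y)ᴴ * (M * Y) := by
      rw [Matrix.mul_sub, Matrix.sub_mul, Matrix.conjTranspose_mul]
      rw [Matrix.mul_smul, Matrix.smul_mul, Matrix.mul_one]
      ring_nf
      noncomm_ring
    rw [hexp, Matrix.trace_sub, Matrix.trace_smul] at htr
    simp only [Complex.sub_re, smul_eq_mul, Complex.mul_re, Complex.ofReal_re, Complex.ofReal_im, zero_mul, sub_zero] at htr
    rw [emb_norm_sq, mul_pow, emb_norm_sq]
    linarith
  have h2 : 0 ≤ c * ‖emb Y‖ := mul_nonneg hc (norm_nonneg _)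
  exact (pow_le_pow_iff_left₀ (norm_nonneg _) h2 (by norm_num)).mp key

lemma exists_sign_unitary {A : Matrix (Fin d) (Fin d) ℂ} (hA : A.IsHermitian) :
    ∃ U : Matrix (Fin d) (Fin d) ℂ, Uᴴ = U ∧ U * U = 1 ∧
      U * A = (Matrix.posSemidef_conjTranspose_mul_self A).sqrt := by
  classical
  set V : Matrix (Fin d) (Fin d) ℂ := (hA.eigenvectorUnitary : Matrix (Fin d) (Fin d) ℂ) with hVdef
  set a : Fin d → ℝ := hA.eigenvalues with hadef
  have hV1 : V * Vᴴ = 1 := by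
    have := Matrix.mem_unitaryGroup_iff.mp hA.eigenvectorUnitary.2
    rwa [Matrix.star_eq_conjTranspose] at this
  have hV2 : Vᴴ * V = 1 := by
    have := Matrix.mem_unitaryGroup_iff'.mp hA.eigenvectorUnitary.2
    rwa [Matrix.star_eq_conjTranspose] at this
  have hspec : A = V * Matrix.diagonal ((↑) ∘ a) * Vᴴ := by
    have := hA.spectral_theorem
    rwa [Unitary.conjStarAlgAut_apply, Matrix.star_eq_conjTranspose] at this
  have hmul : ∀ f g : Fin d → ℂ, (V * Matrix.diagonal f * Vᴴ) * (V * Matrix.diagonal g * Vᴴ)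
      = V * Matrix.diagonal (fun i => f i * g i) * Vᴴ := by
    intro f g
    calc (V * Matrix.diagonal f * Vᴴ) * (V * Matrix.diagonal g * Vᴴ)
        = V * Matrix.diagonal f * (Vᴴ * V) * Matrix.diagonal g * Vᴴ := by
          simp only [Matrix.mul_assoc]
      _ = V * (Matrix.diagonal f * Matrix.diagonal g) * Vᴴ := by
          rw [hV2]; simp only [Matrix.mul_one, Matrix.mul_assoc]
      _ = V * Matrix.diagonal (fun i => f i * g i) * Vᴴ := by
          rw [Matrix.diagonal_mul_diagonal]
  set c : Fin d → ℂ := fun i => if a i < 0 then -1 else 1 with hcdef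
  refine ⟨V * Matrix.diagonal c * Vᴴ, ?_, ?_, ?_⟩
  · rw [Matrix.conjTranspose_mul, Matrix.conjTranspose_mul, Matrix.conjTranspose_conjTranspose,
      Matrix.diagonal_conjTranspose]
    have : star c = c := by
      funext i
      simp only [Pi.star_apply, hcdef]
      split <;> simp
    rw [this, Matrix.mul_assoc]
  · rw [hmul]
    have : (fun i => c i * c i) = fun _ => (1 : ℂ) := by
      funext i
      simp only [hcdef]
      split <;> norm_num
    rw [this, Matrix.diagonal_one, Matrix.mul_one, hV1]
  · have hca : (fun i => c i * ((↑) ∘ a) i) = fun i => ((|a i| : ℝ) : ℂ) := by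
      funext i
      simp only [hcdef, Function.comp_apply]
      split_ifs with h
      · rw [abs_of_neg h]; push_cast; ring
      · rw [abs_of_nonneg (not_lt.mp h)]; ring
    have hUA : (V * Matrix.diagonal c * Vᴴ) * A = V * Matrix.diagonal (fun i => ((|a i| : ℝ) : ℂ)) * Vᴴ := by
      rw [hspec, hmul, hca]
    rw [hUA]
    have hS : (V * Matrix.diagonal (fun i => ((|a i| : ℝ) : ℂ)) * Vᴴ).PosSemidef := by
      refine Matrix.PosSemidef.mul_mul_conjTranspose_same ?_ V
      refine Matrix.posSemidef_diagonal_iff.mpr fun i => ?_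
      exact_mod_cast Complex.zero_le_real.mpr (abs_nonneg _)
    refine hS.eq_sqrt_of_sq_eq _ ?_
    rw [pow_two, hmul, hA.eq, hspec, hmul]
    congr 2
    funext i
    simp only [Function.comp_apply, ← Complex.ofReal_mul, abs_mul_abs_self]

lemma re_inner_le_norm' (x y : EuclideanSpace ℂ (Fin d × Fin d)) :
    (inner ℂ x y : ℂ).re ≤ ‖x‖ * ‖y‖ := by
  have := re_inner_le_norm (𝕜 := ℂ) x y
  simpa using this

lemma norm_sub_sq' (x y : EuclideanSpace ℂ (Fin d × Fin d)) :
    ‖x - y‖ ^ 2 = ‖x‖ ^ 2 - 2 * (inner ℂ x y : ℂ).re + ‖y‖ ^ 2 := by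
  have := @norm_sub_sq ℂ _ _ _ _ x y
  simpa using this

lemma conj_diag_sub {V : Matrix (Fin d) (Fin d) ℂ} (f g : Fin d → ℂ) :
    V * Matrix.diagonal f * Vᴴ - V * Matrix.diagonal g * Vᴴ
      = V * Matrix.diagonal (fun i => f i - g i) * Vᴴ := by
  rw [← Matrix.sub_mul, ← Matrix.mul_sub, Matrix.diagonal_sub]

lemma conj_diag_mul {V : Matrix (Fin d) (Fin d) ℂ} (hV2 : Vᴴ * V = 1) (f g : Fin d → ℂ) :
    (V * Matrix.diagonal f * Vᴴ) * (V * Matrix.diagonal g * Vᴴ)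
      = V * Matrix.diagonal (fun i => f i * g i) * Vᴴ := by
  calc (V * Matrix.diagonal f * Vᴴ) * (V * Matrix.diagonal g * Vᴴ)
      = V * Matrix.diagonal f * (Vᴴ * V) * Matrix.diagonal g * Vᴴ := by
        simp only [Matrix.mul_assoc]
    _ = V * (Matrix.diagonal f * Matrix.diagonal g) * Vᴴ := by
        rw [hV2]; simp only [Matrix.mul_one, Matrix.mul_assoc]
    _ = V * Matrix.diagonal (fun i => f i * g i) * Vᴴ := by
        rw [Matrix.diagonal_mul_diagonal]

lemma smul_one_conj {V : Matrix (Fin d) (Fin d) ℂ} (hV1 : V * Vᴴ = 1) (t : ℂ) :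
    t • (1 : Matrix (Fin d) (Fin d) ℂ) = V * Matrix.diagonal (fun _ => t) * Vᴴ := by
  rw [Matrix.smul_one_eq_diagonal]
  calc Matrix.diagonal (fun _ => t) = t • (1 : Matrix (Fin d) (Fin d) ℂ) := by
        rw [Matrix.smul_one_eq_diagonal]
    _ = t • (V * Vᴴ) := by rw [hV1]
    _ = V * (t • (1 : Matrix (Fin d) (Fin d) ℂ)) * Vᴴ := by
        rw [Matrix.mul_smul, Matrix.smul_mul, Matrix.mul_one]
    _ = V * Matrix.diagonal (fun _ => t) * Vᴴ := by rw [Matrix.smul_one_eq_diagonal]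

lemma psd_conj_diag (V : Matrix (Fin d) (Fin d) ℂ) {f : Fin d → ℝ} (hf : ∀ i, 0 ≤ f i) :
    Matrix.PosSemidef (V * Matrix.diagonal (fun i => ((f i : ℝ) : ℂ)) * Vᴴ) := by
  refine Matrix.PosSemidef.mul_mul_conjTranspose_same ?_ V
  refine Matrix.posSemidef_diagonal_iff.mpr fun i => ?_
  exact_mod_cast Complex.zero_le_real.mpr (hf i)

end Helpers

set_option maxHeartbeats 1000000 in
/-- There is a universal constant `C` such that: for Hermitian `R`, positive semidefinite
`σ` of trace `1`, `μ = Tr(R²σ)`, and `0 ≤ δ ≤ 1`, if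
`‖σ^{1/2} R σ^{1/2}‖₁ ≥ (1 - δ)√μ`, then `‖(R² - μ·Id)σ^{1/2}‖_F² ≤ C √δ ‖R‖_op² μ`. -/
theorem near_saturation : ∃ C : ℝ, 0 < C ∧
    ∀ (d : ℕ) (R σ : Matrix (Fin d) (Fin d) ℂ) (hR : R.IsHermitian) (hσ : σ.PosSemidef),
      σ.trace = 1 →
      ∀ δ : ℝ, 0 ≤ δ → δ ≤ 1 →
      (1 - δ) * Real.sqrt (((R * R * σ).trace).re) ≤ nucNorm (hσ.sqrt * R * hσ.sqrt) →
      frobNorm ((R * R - ((((R * R * σ).trace).re : ℝ) : ℂ) • (1 : Matrix (Fin d) (Fin d) ℂ)) * hσ.sqrt) ^ 2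
        ≤ C * Real.sqrt δ * opNorm R ^ 2 * ((R * R * σ).trace).re := by
  classical
  refine ⟨5, by norm_num, ?_⟩
  intro d R σ hR hσ htr δ hδ0 hδ1 hhyp
  set s := hσ.sqrt with hsdef
  have hsH : sᴴ = s := hσ.posSemidef_sqrt.1
  have hss : s * s = σ := hσ.sqrt_mul_self
  have hRH : Rᴴ = R := hR
  set μ := ((R * R * σ).trace).re with hμdef
  set B := R * s with hBdef
  have hBtr : (Bᴴ * B).trace = (R * R * σ).trace := by
    have h1 : Bᴴ * B = s * ((R * R) * s) := by
      rw [hBdef, Matrix.conjTranspose_mul, hsH, hRH]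
      noncomm_ring
    rw [h1, Matrix.trace_mul_comm, Matrix.mul_assoc, hss]
  have hμ0 : 0 ≤ μ := by
    rw [hμdef, ← hBtr]
    exact trace_re_nonneg (Matrix.posSemidef_conjTranspose_mul_self B)
  have hBn : ‖emb B‖ ^ 2 = μ := by rw [emb_norm_sq, hμdef, hBtr]
  have hAH : (s * R * s).IsHermitian := by
    show (s * R * s)ᴴ = s * R * s
    rw [Matrix.conjTranspose_mul, Matrix.conjTranspose_mul, hsH, hRH, Matrix.mul_assoc]
  obtain ⟨U, hUH, hUU, hUA⟩ := exists_sign_unitary hAH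
  set X := s * U with hXdef
  have hXH : Xᴴ = U * s := by rw [hXdef, Matrix.conjTranspose_mul, hUH, hsH]
  have hXX : (s * U) * (U * s) = σ := by
    calc (s * U) * (U * s) = s * (U * U) * s := by simp only [Matrix.mul_assoc]
      _ = σ := by rw [hUU, Matrix.mul_one, hss]
  have hXtr : (Xᴴ * X).trace = 1 := by
    rw [hXH, hXdef, Matrix.trace_mul_comm, hXX, htr]
  have hXn : ‖emb X‖ ^ 2 = 1 := by rw [emb_norm_sq, hXtr, Complex.one_re]
  have hXn1 : ‖emb X‖ = 1 := by
    have h0 := norm_nonneg (emb X)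
    nlinarith [hXn]
  have hXXH : X * Xᴴ = σ := by rw [hXdef, hXH, hXX]
  have hsqμ0 : (0:ℝ) ≤ Real.sqrt μ := Real.sqrt_nonneg μ
  have hμs : Real.sqrt μ * Real.sqrt μ = μ := Real.mul_self_sqrt hμ0
  have hinner : (1 - δ) * Real.sqrt μ ≤ (inner ℂ (emb X) (emb B) : ℂ).re := by
    rw [emb_inner]
    have hXB : Xᴴ * B = U * (s * R * s) := by
      rw [hXH, hBdef]; simp only [Matrix.mul_assoc]
    have hnn : (U * (s * R * s)).trace.re = nucNorm (s * R * s) := by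
      rw [nucNorm, hUA]
    rw [hXB, hnn]
    exact hhyp
  -- E
  set Em := B - (Real.sqrt μ : ℂ) • X with hEmdef
  set e0 := emb Em with he0def
  have he0 : e0 = emb B - (Real.sqrt μ : ℂ) • emb X := by
    rw [he0def, hEmdef, emb_sub, emb_smul]
  have he2 : ‖e0‖ ^ 2 ≤ 2 * δ * μ := by
    rw [he0, norm_sub_sq']
    rw [inner_smul_right]
    have hre : ((Real.sqrt μ : ℂ) * (inner ℂ (emb B) (emb X) : ℂ)).re
        = Real.sqrt μ * (inner ℂ (emb B) (emb X) : ℂ).re := by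
      simp [Complex.mul_re]
    have hsym : (inner ℂ (emb B) (emb X) : ℂ).re = (inner ℂ (emb X) (emb B) : ℂ).re := by
      rw [← inner_conj_symm (emb X) (emb B), Complex.conj_re]
    have hnsm : ‖(Real.sqrt μ : ℂ) • emb X‖ ^ 2 = μ := by
      rw [norm_smul, mul_pow, hXn, mul_one]
      simp only [Complex.norm_real, Real.norm_eq_abs, abs_of_nonneg hsqμ0]
      exact Real.sq_sqrt hμ0
    rw [hre, hsym, hnsm, hBn]
    have hlow : (1 - δ) * μ ≤ Real.sqrt μ * (inner ℂ (emb X) (emb B) : ℂ).re := by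
      have := mul_le_mul_of_nonneg_left hinner hsqμ0
      calc (1 - δ) * μ = Real.sqrt μ * ((1 - δ) * Real.sqrt μ) := by
            linear_combination (δ - 1) * hμs
        _ ≤ _ := this
    linarith
  have hBsplit : B = (Real.sqrt μ : ℂ) • X + Em := by rw [hEmdef]; abel
  -- operator norm facts
  set N := opNorm R with hNdef
  have hN0 : 0 ≤ N := norm_nonneg _
  set r := hR.eigenvalues with hrdef
  set W := (hR.eigenvectorUnitary : Matrix (Fin d) (Fin d) ℂ) with hWdef
  have hW1 : W * Wᴴ = 1 := by
    have := Matrix.mem_unitaryGroup_iff.mp hR.eigenvectorUnitary.2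
    rwa [Matrix.star_eq_conjTranspose] at this
  have hW2 : Wᴴ * W = 1 := by
    have := Matrix.mem_unitaryGroup_iff'.mp hR.eigenvectorUnitary.2
    rwa [Matrix.star_eq_conjTranspose] at this
  have hspecR : R = W * Matrix.diagonal ((↑) ∘ r) * Wᴴ := by
    have := hR.spectral_theorem
    rwa [Unitary.conjStarAlgAut_apply, Matrix.star_eq_conjTranspose] at this
  have hrb : ∀ i, |r i| ≤ N := fun i => eig_abs_le_opNorm hR i
  have hr2 : ∀ i, r i ^ 2 ≤ N ^ 2 := by
    intro i
    have := hrb i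
    nlinarith [abs_nonneg (r i), sq_abs (r i)]
  have hRR : R * R = W * Matrix.diagonal (fun i => ((↑) ∘ r) i * ((↑) ∘ r) i) * Wᴴ := by
    rw [hspecR, conj_diag_mul hW2]
  have hμN : μ ≤ N ^ 2 := by
    have hpsd1 : Matrix.PosSemidef (((N^2 : ℝ) : ℂ) • 1 - R * R) := by
      rw [hRR, smul_one_conj hW1, conj_diag_sub]
      have hfun : (fun i => ((N^2 : ℝ) : ℂ) - ((↑) ∘ r) i * ((↑) ∘ r) i)
          = fun i => (((N^2 - (r i)^2 : ℝ)) : ℂ) := by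
        funext i
        simp only [Function.comp_apply]
        push_cast
        ring
      rw [hfun]
      exact psd_conj_diag W fun i => sub_nonneg.mpr (hr2 i)
    have h := trace_mul_re_nonneg hpsd1 hσ
    have hexp1 : (((N^2 : ℝ) : ℂ) • 1 - R * R) * σ
        = ((N^2 : ℝ) : ℂ) • σ - R * R * σ := by
      rw [Matrix.sub_mul, Matrix.smul_mul, Matrix.one_mul]
    rw [hexp1, Matrix.trace_sub, Matrix.trace_smul, htr] at h
    simp only [smul_eq_mul, mul_one, Complex.sub_re, Complex.ofReal_re] at h
    linarith
  set M := R * R - ((μ : ℝ) : ℂ) • (1 : Matrix (Fin d) (Fin d) ℂ) with hMdef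
  have hMrep : M = W * Matrix.diagonal (fun i => (((r i)^2 - μ : ℝ) : ℂ)) * Wᴴ := by
    rw [hMdef, hRR, smul_one_conj hW1, conj_diag_sub]
    congr 1
    congr 1
    congr 1
    funext i
    simp only [Function.comp_apply]
    push_cast
    ring
  have hMH : Mᴴ = M := by
    rw [hMdef, Matrix.conjTranspose_sub, Matrix.conjTranspose_smul,
      Matrix.conjTranspose_mul, hRH, Matrix.conjTranspose_one]
    congr 1
    rw [Complex.star_def, Complex.conj_ofReal]
  have hMM : Mᴴ * M = W * Matrix.diagonal
      (fun i => ((((r i)^2 - μ) * ((r i)^2 - μ) : ℝ) : ℂ)) * Wᴴ := by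
    rw [hMH, hMrep, conj_diag_mul hW2]
    congr 1
    congr 1
    funext i
    push_cast
    ring
  have hMpsd : Matrix.PosSemidef ((((N^2)^2 : ℝ) : ℂ) • 1 - Mᴴ * M) := by
    rw [hMM, smul_one_conj hW1, conj_diag_sub]
    have hfun : (fun i => ((((N^2)^2 : ℝ)) : ℂ) - ((((r i)^2 - μ) * ((r i)^2 - μ) : ℝ) : ℂ))
        = fun i => ((((N^2)^2 - ((r i)^2 - μ) * ((r i)^2 - μ) : ℝ)) : ℂ) := by
      funext i
      push_cast
      ring
    rw [hfun]
    refine psd_conj_diag W fun i => ?_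
    nlinarith [hr2 i, hμN, hμ0]
  have hMbound : ∀ Y : Matrix (Fin d) (Fin d) ℂ, ‖emb (M * Y)‖ ≤ N^2 * ‖emb Y‖ :=
    fun Y => emb_mul_le (sq_nonneg N) hMpsd
  have hMσ : ((M * σ).trace).re = 0 := by
    have h1 : M * σ = R * R * σ - ((μ : ℝ) : ℂ) • σ := by
      rw [hMdef, Matrix.sub_mul, Matrix.smul_mul, Matrix.one_mul]
    rw [h1, Matrix.trace_sub, Matrix.trace_smul, htr]
    simp [Complex.sub_re, hμdef]
  have hMX0 : (inner ℂ (emb X) (emb (M * X)) : ℂ).re = 0 := by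
    rw [emb_inner]
    have h1 : Xᴴ * (M * X) = (Xᴴ * M) * X := by rw [Matrix.mul_assoc]
    rw [h1, Matrix.trace_mul_comm, ← Matrix.mul_assoc, hXXH, Matrix.trace_mul_comm, hMσ]
  have hfr : frobNorm (M * s) ^ 2 = (inner ℂ (emb B) (emb (M * B)) : ℂ).re := by
    have hMsH : (M * s)ᴴ = s * M := by rw [Matrix.conjTranspose_mul, hsH, hMH]
    have hcomm : R * M * R = R * R * M := by rw [hMdef]; noncomm_ring
    have hsq : M * M = R * R * M - ((μ : ℝ) : ℂ) • M := by rw [hMdef]; noncomm_ring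
    have hL1 : (M * s)ᴴ * (M * s) = s * ((M * M) * s) := by rw [hMsH]; noncomm_ring
    have hL : ((M * s)ᴴ * (M * s)).trace = ((M * M) * σ).trace := by
      rw [hL1, Matrix.trace_mul_comm, Matrix.mul_assoc, hss]
    have hR1 : Bᴴ * (M * B) = s * ((R * M * R) * s) := by
      rw [hBdef, Matrix.conjTranspose_mul, hsH, hRH]; noncomm_ring
    have hRt : (Bᴴ * (M * B)).trace = ((R * M * R) * σ).trace := by
      rw [hR1, Matrix.trace_mul_comm, Matrix.mul_assoc, hss]
    have hfr0 : frobNorm (M * s) ^ 2 = ((M * s)ᴴ * (M * s)).trace.re := by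
      rw [frobNorm, Real.sq_sqrt (trace_re_nonneg (Matrix.posSemidef_conjTranspose_mul_self _))]
    rw [hfr0, emb_inner, hL, hRt, hcomm]
    have hsplit : (M * M) * σ = (R * R * M) * σ - ((μ : ℝ) : ℂ) • (M * σ) := by
      rw [hsq, Matrix.sub_mul, Matrix.smul_mul]
    rw [hsplit, Matrix.trace_sub, Matrix.trace_smul]
    simp only [Complex.sub_re, smul_eq_mul, Complex.mul_re, Complex.ofReal_re,
      Complex.ofReal_im, zero_mul, sub_zero, hMσ]
    ring
  -- expansion and final bound
  have hMBm : M * B = (Real.sqrt μ : ℂ) • (M * X) + M * Em := by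
    calc M * B = M * ((Real.sqrt μ : ℂ) • X + Em) := by rw [← hBsplit]
      _ = (Real.sqrt μ : ℂ) • (M * X) + M * Em := by
          rw [Matrix.mul_add, Matrix.mul_smul]
  have hexp : (inner ℂ (emb B) (emb (M * B)) : ℂ).re
      = Real.sqrt μ * (Real.sqrt μ * (inner ℂ (emb X) (emb (M * X)) : ℂ).re)
        + Real.sqrt μ * (inner ℂ (emb X) (emb (M * Em)) : ℂ).re
        + Real.sqrt μ * (inner ℂ e0 (emb (M * X)) : ℂ).re
        + (inner ℂ e0 (emb (M * Em)) : ℂ).re := by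
    have h1 : emb B = (Real.sqrt μ : ℂ) • emb X + e0 := by rw [he0]; abel
    have h2 : emb (M * B) = (Real.sqrt μ : ℂ) • emb (M * X) + emb (M * Em) := by
      rw [hMBm, emb_add, emb_smul]
    rw [h1, h2]
    simp only [inner_add_left, inner_add_right, inner_smul_left, inner_smul_right]
    simp only [Complex.add_re, Complex.mul_re, Complex.conj_ofReal, Complex.ofReal_re,
      Complex.ofReal_im, zero_mul, sub_zero]
    ring
  have hb1 : (inner ℂ (emb X) (emb (M * Em)) : ℂ).re ≤ N^2 * ‖e0‖ := by
    calc (inner ℂ (emb X) (emb (M * Em)) : ℂ).re ≤ ‖emb X‖ * ‖emb (M * Em)‖ :=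
          re_inner_le_norm' _ _
      _ ≤ 1 * (N^2 * ‖e0‖) := by
          rw [hXn1, he0def]
          exact mul_le_mul_of_nonneg_left (hMbound Em) (by norm_num)
      _ = N^2 * ‖e0‖ := by ring
  have hb2 : (inner ℂ e0 (emb (M * X)) : ℂ).re ≤ ‖e0‖ * N^2 := by
    calc (inner ℂ e0 (emb (M * X)) : ℂ).re ≤ ‖e0‖ * ‖emb (M * X)‖ := re_inner_le_norm' _ _
      _ ≤ ‖e0‖ * (N^2 * 1) := by
          refine mul_le_mul_of_nonneg_left ?_ (norm_nonneg _)
          have := hMbound X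
          rwa [hXn1] at this
      _ = ‖e0‖ * N^2 := by ring
  have hb3 : (inner ℂ e0 (emb (M * Em)) : ℂ).re ≤ N^2 * ‖e0‖^2 := by
    calc (inner ℂ e0 (emb (M * Em)) : ℂ).re ≤ ‖e0‖ * ‖emb (M * Em)‖ := re_inner_le_norm' _ _
      _ ≤ ‖e0‖ * (N^2 * ‖e0‖) := by
          refine mul_le_mul_of_nonneg_left ?_ (norm_nonneg _)
          rw [he0def]; exact hMbound Em
      _ = N^2 * ‖e0‖^2 := by ring
  have hee : ‖e0‖ ≤ Real.sqrt 2 * Real.sqrt δ * Real.sqrt μ := by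
    have h1 : ‖e0‖ ≤ Real.sqrt (2 * δ * μ) := by
      rw [← Real.sqrt_sq (norm_nonneg e0)]
      exact Real.sqrt_le_sqrt he2
    rwa [Real.sqrt_mul (by positivity), Real.sqrt_mul (by norm_num)] at h1
  have hs2 : Real.sqrt 2 ≤ 1.5 := by
    nlinarith [Real.sq_sqrt (by norm_num : (0:ℝ) ≤ 2), Real.sqrt_nonneg 2]
  have hδs : δ ≤ Real.sqrt δ := by
    nlinarith [Real.sq_sqrt hδ0, Real.sqrt_nonneg δ, Real.sqrt_le_one.mpr hδ1]
  have hδ0' : 0 ≤ Real.sqrt δ := Real.sqrt_nonneg δ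
  have hN2 : (0:ℝ) ≤ N ^ 2 := sq_nonneg N
  have he00 : (0:ℝ) ≤ ‖e0‖ := norm_nonneg _
  have key1 : Real.sqrt μ * ((N:ℝ)^2 * ‖e0‖) ≤ 1.5 * (Real.sqrt δ * (N^2 * μ)) := by
    have h1 : Real.sqrt μ * (N^2 * ‖e0‖)
        ≤ Real.sqrt μ * (N^2 * (Real.sqrt 2 * Real.sqrt δ * Real.sqrt μ)) := by
      refine mul_le_mul_of_nonneg_left ?_ hsqμ0
      exact mul_le_mul_of_nonneg_left hee hN2
    have h2 : Real.sqrt μ * (N^2 * (Real.sqrt 2 * Real.sqrt δ * Real.sqrt μ))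
        = Real.sqrt 2 * (Real.sqrt δ * (N^2 * (Real.sqrt μ * Real.sqrt μ))) := by ring
    rw [h2, hμs] at h1
    have h3 : Real.sqrt 2 * (Real.sqrt δ * (N^2 * μ)) ≤ 1.5 * (Real.sqrt δ * (N^2 * μ)) :=
      mul_le_mul_of_nonneg_right hs2 (by positivity)
    linarith
  have key3 : N^2 * ‖e0‖^2 ≤ 2 * (Real.sqrt δ * (N^2 * μ)) := by
    have h1 : N^2 * ‖e0‖^2 ≤ N^2 * (2*δ*μ) := mul_le_mul_of_nonneg_left he2 hN2
    have h2 : N^2 * (2*δ*μ) ≤ N^2 * (2*Real.sqrt δ*μ) := by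
      refine mul_le_mul_of_nonneg_left ?_ hN2
      nlinarith [hδs, hμ0]
    calc N^2 * ‖e0‖^2 ≤ N^2 * (2*Real.sqrt δ*μ) := le_trans h1 h2
      _ = 2 * (Real.sqrt δ * (N^2 * μ)) := by ring
  show frobNorm (M * s) ^ 2 ≤ 5 * Real.sqrt δ * N ^ 2 * μ
  rw [hfr, hexp, hMX0]
  have t1 : Real.sqrt μ * (inner ℂ (emb X) (emb (M * Em)) : ℂ).re
      ≤ 1.5 * (Real.sqrt δ * (N^2 * μ)) := by
    have := mul_le_mul_of_nonneg_left hb1 hsqμ0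
    linarith
  have t2 : Real.sqrt μ * (inner ℂ e0 (emb (M * X)) : ℂ).re
      ≤ 1.5 * (Real.sqrt δ * (N^2 * μ)) := by
    have h := mul_le_mul_of_nonneg_left hb2 hsqμ0
    have h' : Real.sqrt μ * (‖e0‖ * N^2) = Real.sqrt μ * (N^2 * ‖e0‖) := by ring
    rw [h'] at h
    linarith
  have t3 : (inner ℂ e0 (emb (M * Em)) : ℂ).re ≤ 2 * (Real.sqrt δ * (N^2 * μ)) :=
    le_trans hb3 key3
  have hz : Real.sqrt μ * (Real.sqrt μ * (0:ℝ)) = 0 := by ring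
  rw [hz]
  have : (5:ℝ) * Real.sqrt δ * N ^ 2 * μ = 1.5 * (Real.sqrt δ * (N^2 * μ))
      + 1.5 * (Real.sqrt δ * (N^2 * μ)) + 2 * (Real.sqrt δ * (N^2 * μ)) := by ring
  rw [this]
  linarith
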